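/- Let γ ∈ ℂ with Re γ > 0, let D = |e₀⟩⟨e₁| be the 2×2 matrix unit, and define L(ρ) = i·(Im γ)·(ρ·D†D − D†D·ρ) − (Re γ)·(D†D·ρ + ρ·D†D) + (Re γ)·D·ρ·D†. If ρ is any 2×2 density matrix (Hermitian, positive semidefinite, trace 1) with L(ρ) = 0, then ρ = |e₀⟩⟨e₀|; i.e., ρ₀ = |e₀⟩⟨e₀| is the unique invariant state. -/
import Mathlib


open scoped Matrix

open scoped ComplexOrder

/-- If `Re γ > 0`, any density matrix `ρ` with `L(ρ) = 0` for the Lindblad generator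
`L(ρ) = i(Im γ)[ρ, D†D] − (Re γ){ρ, D†D} + (Re γ) D ρ D†` (`D = |e₀⟩⟨e₁|`) equals
`|e₀⟩⟨e₀|`: the invariant state is unique. -/
theorem invariant_state_unique (γ : ℂ) (hγ : 0 < γ.re)
    (D : Matrix (Fin 2) (Fin 2) ℂ) (hD : D = !![0, 1; 0, 0])
    (L : Matrix (Fin 2) (Fin 2) ℂ → Matrix (Fin 2) (Fin 2) ℂ)
    (hL : ∀ ρ, L ρ =
      (Complex.I * (γ.im : ℂ)) • (ρ * (Dᴴ * D) - (Dᴴ * D) * ρ)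
      - (γ.re : ℂ) • ((Dᴴ * D) * ρ + ρ * (Dᴴ * D))
      + (γ.re : ℂ) • (D * ρ * Dᴴ))
    (ρ : Matrix (Fin 2) (Fin 2) ℂ)
    (hherm : ρ.IsHermitian) (hpsd : ρ.PosSemidef) (htr : ρ.trace = 1)
    (hinv : L ρ = 0) :
    ρ = !![1, 0; 0, 0] := by
  subst hD
  rw [hL] at hinv
  have hDH : (!![0,1;0,0] : Matrix (Fin 2) (Fin 2) ℂ)ᴴ = !![0,0;1,0] := by
    ext i j; fin_cases i <;> fin_cases j <;> simp [Matrix.conjTranspose_apply]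
  rw [hDH] at hinv
  have hre : (γ.re : ℂ) ≠ 0 := by
    exact_mod_cast ne_of_gt hγ
  have h00 := congrFun (congrFun hinv 0) 0
  have h01 := congrFun (congrFun hinv 0) 1
  have h10 := congrFun (congrFun hinv 1) 0
  have htr' : ρ 0 0 + ρ 1 1 = 1 := by
    simpa [Matrix.trace, Fin.sum_univ_two] using htr
  simp [Matrix.mul_apply, Fin.sum_univ_two, Matrix.vecMul, dotProduct, Matrix.sub_apply, Matrix.add_apply, Matrix.smul_apply, smul_eq_mul] at h00 h01 h10
  -- h00 : γ.re * ρ 1 1 = 0 (roughly), etc.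
  have hd : ρ 1 1 = 0 := by
    exact h00.resolve_left (ne_of_gt hγ)
  have hb : ρ 0 1 = 0 := by
    have : (Complex.I * γ.im - γ.re) * ρ 0 1 = 0 := by ring_nf; ring_nf at h01; linear_combination h01
    rcases mul_eq_zero.mp this with h | h
    · exfalso
      have := congrArg Complex.re h
      simp [Complex.sub_re, Complex.mul_re] at this
      exact ne_of_gt hγ (by linarith)
    · exact h
  have hc : ρ 1 0 = 0 := by
    have : (-(Complex.I * γ.im) - γ.re) * ρ 1 0 = 0 := by ring_nf; ring_nf at h10; linear_combination h10
    rcases mul_eq_zero.mp this with h | h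
    · exfalso
      have := congrArg Complex.re h
      simp [Complex.sub_re, Complex.mul_re, Complex.neg_re] at this
      exact ne_of_gt hγ (by linarith)
    · exact h
  have ha : ρ 0 0 = 1 := by rw [hd] at htr'; simpa using htr'
  ext i j
  fin_cases i <;> fin_cases j <;> simp [ha, hb, hc, hd]
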